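/- If the sequence of best approximations (y_ν) of ᵗΘ is infinite, then the set N_Θ = {η ∈ ℝ^n : inf_ν ‖η_1 y_{ν,1} + ... + η_n y_{ν,n}‖ > 0} has Lebesgue measure zero in ℝ^n. -/

import Mathlib

open Filter MeasureTheory

/-- Distance from a real number `t` to the nearest integer, `‖t‖`. -/
noncomputable def distInt (t : ℝ) : ℝ := |t - round t|

/-- The system of linear forms `L_j(x) = ∑_i Θ_j^i x_i` attached to a matrix. -/
noncomputable def lform {m n : ℕ} (Θ : Matrix (Fin n) (Fin m) ℝ) (x : Fin m → ℤ) (j : Fin n) :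
    ℝ := ∑ i, Θ j i * (x i : ℝ)

/-- Sup-norm `max_i |x_i|` of an integer vector, as a real number. -/
noncomputable def supAbs {k : ℕ} (x : Fin k → ℤ) : ℝ := ⨆ i, |(x i : ℝ)|

/-- `ψ^Θ(t)`: the minimum of `max_j ‖L_j(x)‖` over nonzero integer `x` with `max_i |x_i| ≤ t`. -/
noncomputable def psi {m n : ℕ} (Θ : Matrix (Fin n) (Fin m) ℝ) (t : ℝ) : ℝ :=
  sInf { v | ∃ x : Fin m → ℤ, x ≠ 0 ∧ supAbs x ≤ t ∧ v = ⨆ j, distInt (lform Θ x j) }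

/-- `ψ^{Θ,α}(t)`: the inhomogeneous analogue of `ψ^Θ(t)`. -/
noncomputable def psiA {m n : ℕ} (Θ : Matrix (Fin n) (Fin m) ℝ) (α : Fin n → ℝ) (t : ℝ) : ℝ :=
  sInf { v | ∃ x : Fin m → ℤ, x ≠ 0 ∧ supAbs x ≤ t ∧ v = ⨆ j, distInt (lform Θ x j - α j) }

/-- `Θ` is singular: `limsup_{t→∞} t^{m/n} ψ^Θ(t) = 0`. -/
noncomputable def IsSingular {m n : ℕ} (Θ : Matrix (Fin n) (Fin m) ℝ) : Prop :=
  Filter.limsup (fun t : ℝ => ENNReal.ofReal (t ^ ((m : ℝ) / (n : ℝ)) * psi Θ t))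
    Filter.atTop = 0

/-- Property (1) (Khintchine's Chebyshev property). -/
def Chebyshev1 {m n : ℕ} (Θ : Matrix (Fin n) (Fin m) ℝ) : Prop :=
  ∀ α : Fin n → ℝ, ∃ Γ : ℝ, 0 < Γ ∧ ∀ T : ℝ, ∃ x : Fin m → ℤ,
    T ≤ supAbs x ∧
      (⨆ j, distInt (lform Θ x j - α j)) < Γ * (supAbs x) ^ (-(m : ℝ) / (n : ℝ))

/-- Property (2) (Cassels' version, with `Γ` uniform in `α`). -/
def Chebyshev2 {m n : ℕ} (Θ : Matrix (Fin n) (Fin m) ℝ) : Prop :=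
  ∃ Γ : ℝ, 0 < Γ ∧ ∀ α : Fin n → ℝ, ∀ T : ℝ, ∃ x : Fin m → ℤ,
    T ≤ supAbs x ∧
      (⨆ j, distInt (lform Θ x j - α j)) < Γ * (supAbs x) ^ (-(m : ℝ) / (n : ℝ))

/-- `y` is a sequence of best approximations associated to the system of forms of `M`
(for the forms `ᵗL_i` of a matrix `Θ`, apply this to `M = Θᵀ`). -/
def IsBestApproxSeq {p q : ℕ} (M : Matrix (Fin p) (Fin q) ℝ) (y : ℕ → Fin q → ℤ) : Prop :=
  (∀ ν, y ν ≠ 0) ∧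
  StrictMono (fun ν => supAbs (y ν)) ∧
  StrictAnti (fun ν => ⨆ i, distInt (lform M (y ν) i)) ∧
  ∀ ν, ∀ z : Fin q → ℤ, z ≠ 0 → supAbs z < supAbs (y (ν + 1)) →
    (⨆ i, distInt (lform M (y ν) i)) ≤ ⨆ i, distInt (lform M z i)

/-- The constant `K = 2^{-(d-1)} d^{-1/2} σ`, where `σ` is the `(d-1)`-dimensional Hausdorff
measure of the central section `{z ∈ [-1,1]^d : z_1 + ... + z_d = 0}` of the cube. -/
noncomputable def Kconst (d : ℕ) : ℝ :=
  ((MeasureTheory.Measure.hausdorffMeasure ((d : ℝ) - 1) :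
      MeasureTheory.Measure (EuclideanSpace ℝ (Fin d)))
    {z : EuclideanSpace ℝ (Fin d) | (∀ i, |z i| ≤ 1) ∧ ∑ i, z i = 0}).toReal /
    (2 ^ (d - 1) * Real.sqrt d)

/-- `R_{m,n} = max_{0<r<1} r^n (1-r)^m`. -/
noncomputable def Rconst (m n : ℕ) : ℝ :=
  sSup {v : ℝ | ∃ r : ℝ, 0 < r ∧ r < 1 ∧ v = r ^ n * (1 - r) ^ m}

/-- `G_{m,n}(ε) = d^d (m^m n^n)^{d(d-1)} / (ε^d K R)^{d(d-1)}` with `d = m + n`. -/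
noncomputable def Gconst (m n : ℕ) (ε : ℝ) : ℝ :=
  ((m : ℝ) + n) ^ (m + n) * ((m : ℝ) ^ m * (n : ℝ) ^ n) ^ ((m + n) * (m + n - 1)) /
    (ε ^ (m + n) * Kconst (m + n) * Rconst m n) ^ ((m + n) * (m + n - 1))

section AuxNTheta
open Complex Real
open scoped RealInnerProductSpace FourierTransform Topology

lemma measurable_distInt : Measurable distInt := by
  have : distInt = fun t => min (Int.fract t) (1 - Int.fract t) := by
    ext t; exact abs_sub_round_eq_min t
  rw [this]
  exact (measurable_fract.min (measurable_const.sub measurable_fract))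

lemma two_abs_le_abs_sin {u : ℝ} (hu : |u| ≤ 1/2) : 2 * |u| ≤ |Real.sin (π * u)| := by
  have h1 : Real.sin (π * |u|) = |Real.sin (π * u)| := by
    rcases abs_cases u with ⟨h, _⟩ | ⟨h, hneg⟩
    · rw [h]
      refine (_root_.abs_of_nonneg ?_).symm
      apply Real.sin_nonneg_of_nonneg_of_le_pi
      · positivity
      · nlinarith [Real.pi_pos, h ▸ hu]
    · have hsp : Real.sin (π * u) ≤ 0 := by
        apply Real.sin_nonpos_of_nonpos_of_neg_pi_le
        · nlinarith [Real.pi_pos]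
        · nlinarith [Real.pi_pos, h ▸ hu]
      rw [h, mul_neg, Real.sin_neg, abs_of_nonpos hsp]
  rw [← h1]
  have := Real.mul_le_sin (x := π * |u|) (by positivity) (by nlinarith [Real.pi_pos])
  have hπ := Real.pi_pos
  calc 2 * |u| = 2 / π * (π * |u|) := by field_simp
  _ ≤ _ := this

lemma norm_exp_sub_one (θ : ℝ) :
    ‖Complex.exp (θ * Complex.I) - 1‖ = 2 * |Real.sin (θ/2)| := by
  have : Complex.exp (↑θ * Complex.I) - 1
      = ((Real.cos θ - 1 : ℝ) : ℂ) + (Real.sin θ : ℝ) * Complex.I := by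
    rw [Complex.exp_mul_I, ← Complex.ofReal_cos, ← Complex.ofReal_sin]
    push_cast; ring
  rw [this, Complex.norm_def, Complex.normSq_add_mul_I, Real.abs_sin_half]
  have h2 : (Real.cos θ - 1)^2 + Real.sin θ ^2 = 2^2 * ((1 - Real.cos θ)/2) := by
    nlinarith [Real.sin_sq_add_cos_sq θ]
  rw [h2, Real.sqrt_mul (by positivity)]
  simp [Real.sqrt_sq]

lemma abs_sin_pi_round (t : ℝ) :
    |Real.sin (π * (t - round t))| = |Real.sin (π * t)| := by
  have h : π * t = π * (t - round t) + (round t : ℝ) * π := by ring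
  rw [h, Real.sin_add_int_mul_pi, abs_mul]
  have : |((-1 : ℝ)) ^ round t| = 1 := by
    rcases Int.even_or_odd (round t) with he | ho
    · rw [he.neg_one_zpow]; norm_num
    · rw [ho.neg_one_zpow]; norm_num
  rw [this, one_mul]

lemma norm_z_sub_one_ge {t ε : ℝ} (ht : ε ≤ distInt t) :
    4 * ε ≤ ‖Complex.exp (↑(2 * π * t) * Complex.I) - 1‖ := by
  rw [norm_exp_sub_one]
  have h2 : (2 * π * t) / 2 = π * t := by ring
  rw [h2]
  have hu : |t - (round t : ℝ)| ≤ 1/2 := abs_sub_round t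
  have := two_abs_le_abs_sin hu
  rw [abs_sin_pi_round t] at this
  have : 2 * distInt t ≤ |Real.sin (π * t)| := this
  nlinarith [this, ht]

lemma dirichlet_bound {K : ℕ} {t ε : ℝ} (hε : 0 < ε) (ht : ε ≤ distInt t) :
    ‖∑ k ∈ Finset.range K, Complex.exp (↑(2 * π * ((k : ℝ) * t)) * Complex.I)‖
      ≤ 1 / (2 * ε) := by
  set z : ℂ := Complex.exp (↑(2 * π * t) * Complex.I) with hz
  have hzk : ∀ k : ℕ, Complex.exp (↑(2 * π * ((k : ℝ) * t)) * Complex.I) = z ^ k := by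
    intro k
    rw [hz, ← Complex.exp_nat_mul]
    congr 1
    push_cast; ring
  have hzne : z ≠ 1 := by
    intro h
    rcases Complex.exp_eq_one_iff.mp h with ⟨m, hm⟩
    have hI : (Complex.I : ℂ) ≠ 0 := Complex.I_ne_zero
    have h3 : 2 * π * t = (m : ℝ) * (2 * π) := by
      have := congrArg Complex.im hm
      simpa using this
    have htm : t = (m : ℝ) := by
      nlinarith [h3, Real.pi_pos]
    have : distInt t = 0 := by
      rw [distInt, htm]
      simp
    linarith [ht, hε, this ▸ ht]
  simp_rw [hzk]
  rw [geom_sum_eq hzne, norm_div]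
  have hnum : ‖z ^ K - 1‖ ≤ 2 := by
    calc ‖z ^ K - 1‖ ≤ ‖z ^ K‖ + ‖(1 : ℂ)‖ := by
          simpa [sub_eq_add_neg] using norm_add_le (z ^ K) (-1)
    _ ≤ 2 := by
        rw [norm_pow, hz, Complex.norm_exp_ofReal_mul_I]
        norm_num
  have hden : 4 * ε ≤ ‖z - 1‖ := norm_z_sub_one_ge ht
  have h4 : 0 < 4 * ε := by linarith
  calc ‖z ^ K - 1‖ / ‖z - 1‖ ≤ 2 / (4 * ε) :=
        div_le_div₀ (by norm_num) hnum h4 hden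
  _ = 1 / (2 * ε) := by
        rw [div_eq_div_iff (by linarith) (by linarith)]; ring


lemma supAbs_eq {k : ℕ} (hk : 0 < k) (x : Fin k → ℤ) :
    ∃ j, (∀ i, |(x i : ℝ)| ≤ |(x j : ℝ)|) ∧ supAbs x = |(x j : ℝ)| := by
  haveI : Nonempty (Fin k) := ⟨⟨0, hk⟩⟩
  obtain ⟨j, hj⟩ := Finite.exists_max (fun i : Fin k => |(x i : ℝ)|)
  refine ⟨j, hj, ?_⟩
  rw [supAbs]
  exact le_antisymm (ciSup_le hj)
    (le_ciSup (Set.Finite.bddAbove (Set.finite_range fun i : Fin k => |(x i : ℝ)|)) j)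

lemma supAbs_growth {n : ℕ} (hn : 0 < n) (y : ℕ → Fin n → ℤ)
    (hmono : StrictMono fun ν => supAbs (y ν)) : ∀ ν : ℕ, (ν : ℝ) ≤ supAbs (y ν) := by
  have hint : ∀ ν, ∃ a : ℤ, 0 ≤ a ∧ supAbs (y ν) = (a : ℝ) := by
    intro ν
    obtain ⟨j, _, hj⟩ := supAbs_eq hn (y ν)
    exact ⟨|y ν j|, abs_nonneg _, by rw [hj]; push_cast; rfl⟩
  have key : ∀ ν, supAbs (y ν) + 1 ≤ supAbs (y (ν + 1)) := by
    intro ν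
    obtain ⟨a, _, ha⟩ := hint ν
    obtain ⟨b, _, hb⟩ := hint (ν + 1)
    have h1 : (a : ℝ) < (b : ℝ) := by
      rw [← ha, ← hb]; exact hmono (Nat.lt_succ_self ν)
    have h2 : a + 1 ≤ b := by exact_mod_cast h1
    rw [ha, hb]
    exact_mod_cast h2
  intro ν
  induction ν with
  | zero =>
    obtain ⟨a, ha0, ha⟩ := hint 0
    rw [ha]; exact_mod_cast ha0
  | succ ν ih =>
    push_cast
    linarith [key ν]

lemma coord_le_norm {n : ℕ} (x : EuclideanSpace ℝ (Fin n)) (j : Fin n) : |x j| ≤ ‖x‖ := by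
  rw [EuclideanSpace.norm_eq]
  rw [show |x j| = Real.sqrt (‖x j‖ ^ 2) by
    rw [Real.norm_eq_abs, Real.sqrt_sq_eq_abs, _root_.abs_abs]]
  apply Real.sqrt_le_sqrt
  exact Finset.single_le_sum (fun i _ => sq_nonneg ‖x i‖) (Finset.mem_univ j)

lemma dirichlet_sq (K : ℕ) (t : ℝ) :
    ∑ p ∈ Finset.range K ×ˢ Finset.range K,
        Complex.exp (↑(2 * π * (((p.1 : ℝ) - p.2) * t)) * Complex.I)
      = ((‖∑ k ∈ Finset.range K,
          Complex.exp (↑(2 * π * ((k : ℝ) * t)) * Complex.I)‖ ^ 2 : ℝ) : ℂ) := by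
  set S : ℂ := ∑ k ∈ Finset.range K, Complex.exp (↑(2 * π * ((k : ℝ) * t)) * Complex.I) with hS
  have h1 : ((‖S‖ ^ 2 : ℝ) : ℂ) = S * (starRingEnd ℂ) S := by
    rw [Complex.mul_conj, Complex.normSq_eq_norm_sq]
  rw [h1, map_sum, Finset.sum_mul_sum, Finset.sum_product]
  apply Finset.sum_congr rfl
  intro k _
  apply Finset.sum_congr rfl
  intro l _
  rw [← Complex.exp_conj, ← Complex.exp_add]
  congr 1
  have : (starRingEnd ℂ) (↑(2 * π * ((l : ℝ) * t)) * Complex.I)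
      = -(↑(2 * π * ((l : ℝ) * t)) * Complex.I) := by
    rw [map_mul, Complex.conj_I, Complex.conj_ofReal]; ring
  rw [this]
  push_cast; ring

lemma main_zero {n : ℕ} (hn : 0 < n) (y : ℕ → Fin n → ℤ)
    (hgrow : ∀ ν : ℕ, (ν : ℝ) ≤ supAbs (y ν)) {ε : ℝ} (hε : 0 < ε)
    (A : Set (EuclideanSpace ℝ (Fin n))) (hA : MeasurableSet A) (hAfin : volume A < ⊤)
    (hAsub : ∀ η ∈ A, ∀ ν : ℕ, ε ≤ distInt (∑ j, η j * (y ν j : ℝ))) :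
    volume A = 0 := by
  set Y : ℕ → EuclideanSpace ℝ (Fin n) := fun ν => WithLp.toLp 2 (fun j => (y ν j : ℝ) : Fin n → ℝ) with hY
  have hinner : ∀ (η : EuclideanSpace ℝ (Fin n)) (ν : ℕ), ⟪η, Y ν⟫ = ∑ j, η j * (y ν j : ℝ) := by
    intro η ν
    rw [PiLp.inner_apply]
    simp [Y, mul_comm]
  set f : EuclideanSpace ℝ (Fin n) → ℂ := A.indicator (fun _ => (1 : ℂ)) with hf
  set K : ℕ := ⌈1 / (4 * ε ^ 2)⌉₊ + 1 with hKdef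
  have hK : 1 / (4 * ε ^ 2) < (K : ℝ) := by
    have h1 := Nat.le_ceil (1 / (4 * ε ^ 2))
    have h2 : ((⌈1 / (4 * ε ^ 2)⌉₊ : ℝ)) < (K : ℝ) := by
      rw [hKdef]; push_cast; linarith
    linarith
  -- continuity
  have h_contin : ∀ (c : ℝ) (ν : ℕ),
      Continuous fun η : EuclideanSpace ℝ (Fin n) => Complex.exp (↑(2 * π * (c * ⟪η, Y ν⟫)) * Complex.I) := by
    intro c ν
    apply Complex.continuous_exp.comp
    apply Continuous.mul ?_ continuous_const
    apply Complex.continuous_ofReal.comp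
    have h1 : Continuous fun η : EuclideanSpace ℝ (Fin n) => (inner ℝ η (Y ν) : ℝ) :=
      continuous_id.inner continuous_const
    exact continuous_const.mul (continuous_const.mul h1)
  have h_int : ∀ (c : ℝ) (ν : ℕ),
      IntegrableOn (fun η : EuclideanSpace ℝ (Fin n) => Complex.exp (↑(2 * π * (c * ⟪η, Y ν⟫)) * Complex.I)) A volume := by
    intro c ν
    refine Integrable.mono' (g := fun _ => (1 : ℝ))
      (integrableOn_const hAfin.ne)
      ((h_contin c ν).aestronglyMeasurable.restrict) ?_
    filter_upwards with η
    rw [Complex.norm_exp_ofReal_mul_I]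
  -- the terms
  have term_eq : ∀ (p : ℕ × ℕ) (ν : ℕ),
      (∫ v, 𝐞 (-⟪v, (((p.2 : ℝ) - p.1)) • Y ν⟫) • f v)
        = ∫ η in A, Complex.exp (↑(2 * π * (((p.1 : ℝ) - p.2) * ⟪η, Y ν⟫)) * Complex.I) := by
    intro p ν
    rw [← integral_indicator hA]
    congr 1
    ext v
    by_cases hv : v ∈ A
    · rw [Set.indicator_of_mem hv]
      rw [hf, Set.indicator_of_mem hv]
      simp only [Circle.smul_def, Real.fourierChar_apply, smul_eq_mul, mul_one]
      congr 2
      rw [real_inner_smul_right]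
      push_cast; ring
    · rw [Set.indicator_of_notMem hv, hf, Set.indicator_of_notMem hv, smul_zero]
  -- the sum of the terms equals the integral of the squared Dirichlet kernel
  have hFeq : ∀ ν : ℕ,
      (∑ p ∈ Finset.range K ×ˢ Finset.range K,
        ∫ v, 𝐞 (-⟪v, (((p.2 : ℝ) - p.1)) • Y ν⟫) • f v)
      = (((∫ η in A, ‖∑ k ∈ Finset.range K,
          Complex.exp (↑(2 * π * ((k : ℝ) * ⟪η, Y ν⟫)) * Complex.I)‖ ^ 2) : ℝ) : ℂ) := by
    intro ν
    have h1 : (∑ p ∈ Finset.range K ×ˢ Finset.range K,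
        ∫ v, 𝐞 (-⟪v, (((p.2 : ℝ) - p.1)) • Y ν⟫) • f v)
        = ∑ p ∈ Finset.range K ×ˢ Finset.range K,
          ∫ η in A, Complex.exp (↑(2 * π * (((p.1 : ℝ) - p.2) * ⟪η, Y ν⟫)) * Complex.I) := by
      exact Finset.sum_congr rfl fun p _ => term_eq p ν
    rw [h1, ← integral_finset_sum _ (fun p _ => h_int _ ν)]
    have h2 : ∀ η : EuclideanSpace ℝ (Fin n),
        (∑ p ∈ Finset.range K ×ˢ Finset.range K,
          Complex.exp (↑(2 * π * (((p.1 : ℝ) - p.2) * ⟪η, Y ν⟫)) * Complex.I))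
        = ((‖∑ k ∈ Finset.range K,
            Complex.exp (↑(2 * π * ((k : ℝ) * ⟪η, Y ν⟫)) * Complex.I)‖ ^ 2 : ℝ) : ℂ) :=
      fun η => dirichlet_sq K _
    rw [show (fun η => ∑ p ∈ Finset.range K ×ˢ Finset.range K,
          Complex.exp (↑(2 * π * (((p.1 : ℝ) - p.2) * ⟪η, Y ν⟫)) * Complex.I)) = fun η =>
        ((‖∑ k ∈ Finset.range K,
            Complex.exp (↑(2 * π * ((k : ℝ) * ⟪η, Y ν⟫)) * Complex.I)‖ ^ 2 : ℝ) : ℂ)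
      from funext h2]
    exact integral_ofReal
  -- upper bound for the integral of the squared Dirichlet kernel
  have hDcont : ∀ ν : ℕ, Continuous fun η : EuclideanSpace ℝ (Fin n) =>
      ‖∑ k ∈ Finset.range K,
        Complex.exp (↑(2 * π * ((k : ℝ) * ⟪η, Y ν⟫)) * Complex.I)‖ ^ 2 := by
    intro ν
    apply Continuous.pow
    apply continuous_norm.comp
    exact continuous_finset_sum _ (fun k _ => h_contin k ν)
  have hbound : ∀ ν : ℕ,
      (∫ η in A, ‖∑ k ∈ Finset.range K,
        Complex.exp (↑(2 * π * ((k : ℝ) * ⟪η, Y ν⟫)) * Complex.I)‖ ^ 2)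
      ≤ 1 / (4 * ε ^ 2) * (volume A).toReal := by
    intro ν
    have hptwise : ∀ η ∈ A, ‖∑ k ∈ Finset.range K,
        Complex.exp (↑(2 * π * ((k : ℝ) * ⟪η, Y ν⟫)) * Complex.I)‖ ^ 2 ≤ 1 / (4 * ε ^ 2) := by
      intro η hη
      have hd : ε ≤ distInt (⟪η, Y ν⟫) := by rw [hinner]; exact hAsub η hη ν
      have h1 := dirichlet_bound (K := K) hε hd
      have h2 : ‖∑ k ∈ Finset.range K,
          Complex.exp (↑(2 * π * ((k : ℝ) * ⟪η, Y ν⟫)) * Complex.I)‖ ^ 2 ≤ (1 / (2 * ε)) ^ 2 :=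
        pow_le_pow_left₀ (norm_nonneg _) h1 2
      have h3 : (1 / (2 * ε)) ^ 2 = 1 / (4 * ε ^ 2) := by
        field_simp; ring
      linarith
    have hIntOn : IntegrableOn (fun η : EuclideanSpace ℝ (Fin n) =>
        ‖∑ k ∈ Finset.range K,
          Complex.exp (↑(2 * π * ((k : ℝ) * ⟪η, Y ν⟫)) * Complex.I)‖ ^ 2) A volume := by
      refine Integrable.mono' (g := fun _ => 1 / (4 * ε ^ 2))
        (integrableOn_const hAfin.ne)
        ((hDcont ν).aestronglyMeasurable.restrict) ?_
      rw [ae_restrict_iff' hA]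
      filter_upwards with η hη
      rw [Real.norm_eq_abs, _root_.abs_of_nonneg (pow_nonneg (norm_nonneg _) 2)]
      exact hptwise η hη
    calc (∫ η in A, ‖∑ k ∈ Finset.range K,
        Complex.exp (↑(2 * π * ((k : ℝ) * ⟪η, Y ν⟫)) * Complex.I)‖ ^ 2)
        ≤ ∫ _η in A, 1 / (4 * ε ^ 2) :=
          setIntegral_mono_on hIntOn (integrableOn_const hAfin.ne) hA hptwise
    _ = 1 / (4 * ε ^ 2) * (volume A).toReal := by
        rw [setIntegral_const, smul_eq_mul, measureReal_def]; ring
  -- the limit of the sums of the terms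
  have hlim : Tendsto (fun ν : ℕ => ∑ p ∈ Finset.range K ×ˢ Finset.range K,
      ∫ v, 𝐞 (-⟪v, (((p.2 : ℝ) - p.1)) • Y ν⟫) • f v) atTop
      (𝓝 ((((K : ℝ) * (volume A).toReal : ℝ)) : ℂ)) := by
    have hsum : ((((K : ℝ) * (volume A).toReal : ℝ)) : ℂ)
        = ∑ p ∈ Finset.range K ×ˢ Finset.range K,
          (if p.1 = p.2 then (((volume A).toReal : ℝ) : ℂ) else 0) := by
      rw [Finset.sum_product]
      have hinn : ∀ k ∈ Finset.range K,
          (∑ l ∈ Finset.range K, if k = l then (((volume A).toReal : ℝ) : ℂ) else 0)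
          = (((volume A).toReal : ℝ) : ℂ) := by
        intro k hk
        rw [Finset.sum_ite_eq (Finset.range K) k fun _ => (((volume A).toReal : ℝ) : ℂ)]
        exact if_pos hk
      rw [Finset.sum_congr rfl hinn, Finset.sum_const, Finset.card_range, nsmul_eq_mul]
      push_cast; ring
    rw [hsum]
    apply tendsto_finset_sum
    intro p _
    by_cases hpq : p.1 = p.2
    · rw [if_pos hpq]
      have hconst : ∀ ν : ℕ,
          (∫ v, 𝐞 (-⟪v, (((p.2 : ℝ) - p.1)) • Y ν⟫) • f v) = (((volume A).toReal : ℝ) : ℂ) := by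
        intro ν
        rw [term_eq]
        simp only [hpq, sub_self, zero_mul, mul_zero, Complex.ofReal_zero, Complex.exp_zero]
        rw [setIntegral_const]
        simp [measureReal_def]
      exact (tendsto_congr hconst).mpr tendsto_const_nhds
    · rw [if_neg hpq]
      have hcc : Tendsto (fun ν : ℕ => (((p.2 : ℝ) - p.1)) • Y ν) atTop
          (cocompact (EuclideanSpace ℝ (Fin n))) := by
        apply tendsto_cocompact_of_tendsto_dist_comp_atTop (0 : EuclideanSpace ℝ (Fin n))
        simp only [dist_zero_right]
        apply tendsto_atTop_mono ?_ tendsto_natCast_atTop_atTop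
        intro ν
        rw [norm_smul]
        obtain ⟨j, hj1, hj2⟩ := supAbs_eq hn (y ν)
        have h3 : |(y ν j : ℝ)| ≤ ‖Y ν‖ := by
          have := coord_le_norm (Y ν) j
          simpa [hY] using this
        have h4 : (1 : ℝ) ≤ ‖(((p.2 : ℝ) - p.1))‖ := by
          rw [Real.norm_eq_abs]
          have h5 : (1 : ℤ) ≤ |(p.2 : ℤ) - (p.1 : ℤ)| := by
            have hne : (p.2 : ℤ) - (p.1 : ℤ) ≠ 0 :=
              sub_ne_zero.mpr (by exact_mod_cast Ne.symm hpq)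
            rcases hne.lt_or_gt with h | h
            · rw [abs_of_neg h]; omega
            · rw [_root_.abs_of_pos h]; omega
          calc (1 : ℝ) ≤ ((|(p.2 : ℤ) - (p.1 : ℤ)| : ℤ) : ℝ) := by exact_mod_cast h5
          _ = |((p.2 : ℝ)) - p.1| := by push_cast; ring_nf
        calc (ν : ℝ) ≤ supAbs (y ν) := hgrow ν
          _ = |(y ν j : ℝ)| := hj2
          _ ≤ ‖Y ν‖ := h3
          _ ≤ ‖(((p.2 : ℝ) - p.1))‖ * ‖Y ν‖ := le_mul_of_one_le_left (norm_nonneg _) h4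
      exact (tendsto_integral_exp_inner_smul_cocompact f).comp hcc
  -- conclusion
  have hreal : Tendsto (fun ν : ℕ => ∫ η in A, ‖∑ k ∈ Finset.range K,
      Complex.exp (↑(2 * π * ((k : ℝ) * ⟪η, Y ν⟫)) * Complex.I)‖ ^ 2) atTop
      (𝓝 ((K : ℝ) * (volume A).toReal)) := by
    have h2 := hlim
    simp only [hFeq] at h2
    have h3 := (Complex.continuous_re.tendsto _).comp h2
    simpa [Function.comp_def] using h3
  have hle := le_of_tendsto hreal (Filter.Eventually.of_forall hbound)
  have hc0 : (0 : ℝ) ≤ (volume A).toReal := ENNReal.toReal_nonneg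
  have hzero : (volume A).toReal = 0 := by
    rcases eq_or_lt_of_le hc0 with h | h
    · exact h.symm
    · exfalso
      have := mul_lt_mul_of_pos_right hK h
      linarith
  rcases (ENNReal.toReal_eq_zero_iff _).mp hzero with h | h
  · exact h
  · exact absurd h hAfin.ne

theorem NTheta_aux {n : ℕ} (hn : 0 < n)
    (y : ℕ → Fin n → ℤ)
    (hmono : StrictMono fun ν => supAbs (y ν)) :
    MeasureTheory.volume
      {η : Fin n → ℝ | 0 < ⨅ ν : ℕ, distInt (∑ j, η j * (y ν j : ℝ))} = 0 := by
  have hgrow := supAbs_growth hn y hmono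
  -- measurability of the basic sets
  have hmeasg : ∀ ν : ℕ, Measurable fun η : Fin n → ℝ => distInt (∑ j, η j * (y ν j : ℝ)) := by
    intro ν
    apply measurable_distInt.comp
    exact Finset.univ.measurable_sum fun j _ => (measurable_pi_apply j).mul_const _
  set B : ℕ → ℕ → Set (Fin n → ℝ) := fun q R =>
    {η : Fin n → ℝ | ∀ ν : ℕ, 1 / ((q : ℝ) + 1) ≤ distInt (∑ j, η j * (y ν j : ℝ))}
      ∩ Metric.ball (0 : Fin n → ℝ) R with hB
  have hBmeas : ∀ q R, MeasurableSet (B q R) := by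
    intro q R
    apply MeasurableSet.inter ?_ measurableSet_ball
    have : {η : Fin n → ℝ | ∀ ν : ℕ, 1 / ((q : ℝ) + 1) ≤ distInt (∑ j, η j * (y ν j : ℝ))}
        = ⋂ ν : ℕ, (fun η : Fin n → ℝ => distInt (∑ j, η j * (y ν j : ℝ))) ⁻¹'
          (Set.Ici (1 / ((q : ℝ) + 1))) := by
      ext η; simp [Set.mem_iInter]
    rw [this]
    exact MeasurableSet.iInter fun ν => (hmeasg ν) measurableSet_Ici
  -- each piece has measure zero
  have hBzero : ∀ q R : ℕ, volume (B q R) = 0 := by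
    intro q R
    set e := (MeasurableEquiv.toLp 2 (Fin n → ℝ)).symm with he
    have hmp := EuclideanSpace.volume_preserving_symm_measurableEquiv_toLp (Fin n)
    have hpre : volume (e ⁻¹' (B q R)) = volume (B q R) :=
      hmp.measure_preimage (hBmeas q R).nullMeasurableSet
    rw [← hpre]
    have hfin : volume (e ⁻¹' (B q R)) < ⊤ := by
      rw [hpre]
      calc volume (B q R) ≤ volume (Metric.ball (0 : Fin n → ℝ) R) :=
            measure_mono Set.inter_subset_right
      _ < ⊤ := measure_ball_lt_top
    apply main_zero hn y hgrow (ε := 1 / ((q : ℝ) + 1)) (by positivity)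
      _ (e.measurable (hBmeas q R)) hfin
    intro η hη ν
    exact hη.1 ν
  -- covering
  apply le_antisymm ?_ zero_le
  calc volume {η : Fin n → ℝ | 0 < ⨅ ν : ℕ, distInt (∑ j, η j * (y ν j : ℝ))}
      ≤ volume (⋃ q : ℕ, ⋃ R : ℕ, B q R) := by
        apply measure_mono
        intro η hη
        have h0 : (0 : ℝ) < ⨅ ν : ℕ, distInt (∑ j, η j * (y ν j : ℝ)) := hη
        obtain ⟨q, hq⟩ := exists_nat_one_div_lt h0
        obtain ⟨R, hR⟩ := exists_nat_gt ‖η‖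
        refine Set.mem_iUnion.mpr ⟨q, Set.mem_iUnion.mpr ⟨R, ?_, ?_⟩⟩
        · intro ν
          have hbdd : BddBelow (Set.range fun ν : ℕ =>
              distInt (∑ j, η j * (y ν j : ℝ))) := by
            refine ⟨0, ?_⟩
            rintro x ⟨ν', rfl⟩
            exact abs_nonneg _
          exact le_trans hq.le (ciInf_le hbdd ν)
        · exact Metric.mem_ball.mpr (by simpa using hR)
  _ = 0 := by
      rw [measure_iUnion_null fun q => measure_iUnion_null fun R => hBzero q R]

end AuxNTheta

/-- If the sequence of best approximations of `ᵗΘ` is infinite, then `N_Θ` has Lebesgue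
measure zero. -/
theorem NTheta_measure_zero {m n : ℕ} (hm : 0 < m) (hn : 0 < n)
    (Θ : Matrix (Fin n) (Fin m) ℝ)
    (y : ℕ → Fin n → ℤ) (hy : IsBestApproxSeq Θ.transpose y) :
    MeasureTheory.volume
      {η : Fin n → ℝ | 0 < ⨅ ν : ℕ, distInt (∑ j, η j * (y ν j : ℝ))} = 0 := by
  have hmono : StrictMono fun ν => supAbs (y ν) := hy.2.1
  exact NTheta_aux hn y hmono
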